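/- Fix integers t ≤ b and define G_b^t[k] = 1 iff S[k] occurs at least 2^{b−t} times in S[k−2^{b+1}..k+2^{b+1}] and k is the leftmost or rightmost occurrence of S[k] in its block of length 2^{b−1}. If a is a τ-majority of S[i..j], where b = ⌊log₂(j−i+1)⌋ and t = ⌈log₂(1/τ)⌉, then there exists k ∈ [i..j] with S[k] = a and G_b^t[k] = 1. -/

import Mathlib

/-- Number of occurrences of `a` in `S[i..j]`. -/
def occCount {A : Type*} [DecidableEq A] (S : ℕ → A) (a : A) (i j : ℕ) : ℕ :=
  ((Finset.Icc i j).filter (fun k => S k = a)).card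

/-- The flag `G_b^t[k] = 1`: `S[k]` occurs at least `2^(b-t)` times in the window
`S[k-2^(b+1)..k+2^(b+1)]` (clipped to `[1..n]`), and `k` is the leftmost or rightmost
occurrence of `S[k]` in its block of length `2^(b-1)`. -/
def Gflag {A : Type*} [DecidableEq A] (n : ℕ) (S : ℕ → A) (b t : ℕ) (k : ℕ) : Prop :=
  2 ^ (b - t) ≤ occCount S (S k) (max 1 (k - 2 ^ (b + 1))) (min n (k + 2 ^ (b + 1))) ∧
  (let lo := ((k - 1) / 2 ^ (b - 1)) * 2 ^ (b - 1) + 1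
   let hi := min (lo + 2 ^ (b - 1) - 1) n
   (∀ k' ∈ Finset.Icc lo hi, S k' = S k → k ≤ k') ∨
   (∀ k' ∈ Finset.Icc lo hi, S k' = S k → k' ≤ k))

/-- If `a` is a `τ`-majority of `S[i..j]`, with `b = ⌊log₂(j-i+1)⌋` (so
`2^b ≤ j-i+1 ≤ 2^(b+1)`) and `t = ⌈log₂(1/τ)⌉` (so `1/τ ≤ 2^t`), `t ≤ b`, then some
position `k ∈ [i..j]` has `S[k] = a` and `G_b^t[k] = 1`. -/
theorem majority_has_flagged_occurrence {A : Type*} [DecidableEq A]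
    (n : ℕ) (S : ℕ → A) (τ : ℝ) (hτ0 : 0 < τ) (hτ1 : τ ≤ 1)
    (i j : ℕ) (h1i : 1 ≤ i) (hij : i ≤ j) (hjn : j ≤ n)
    (b t : ℕ) (htb : t ≤ b)
    (hb1 : 2 ^ b ≤ j - i + 1) (hb2 : j - i + 1 ≤ 2 ^ (b + 1))
    (ht : 1 / τ ≤ (2 : ℝ) ^ t)
    (a : A) (hmaj : τ * ((j - i + 1 : ℕ) : ℝ) < (occCount S a i j : ℝ)) :
    ∃ k ∈ Finset.Icc i j, S k = a ∧ Gflag n S b t k := by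
  -- basic count lower bound in [i..j]
  have hmain : 2 ^ (b - t) ≤ occCount S a i j := by
    have hτt : (1 : ℝ) / 2 ^ t ≤ τ := by
      rw [div_le_iff₀ (by positivity)]
      rw [div_le_iff₀ hτ0] at ht
      linarith
    have h1 : ((2 : ℝ)) ^ (b - t) ≤ τ * 2 ^ b := by
      have hpow : ((2 : ℝ)) ^ (b - t) * 2 ^ t = 2 ^ b := by
        rw [← pow_add]; congr 1; omega
      have : ((2 : ℝ)) ^ (b - t) = 2 ^ b / 2 ^ t := by
        rw [eq_div_iff (by positivity)]; exact hpow
      rw [this, div_le_iff₀ (by positivity)]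
      have h := mul_le_mul_of_nonneg_right hτt (show (0:ℝ) ≤ 2 ^ b * 2 ^ t by positivity)
      calc (2 : ℝ) ^ b = 1 / 2 ^ t * (2 ^ b * 2 ^ t) := by field_simp
        _ ≤ τ * (2 ^ b * 2 ^ t) := h
        _ = τ * 2 ^ b * 2 ^ t := by ring
    have h2 : ((2 : ℝ)) ^ b ≤ ((j - i + 1 : ℕ) : ℝ) := by
      calc ((2:ℝ)) ^ b = ((2 ^ b : ℕ) : ℝ) := by push_cast; ring
        _ ≤ _ := by exact_mod_cast hb1
    have h3 : ((2 : ℝ)) ^ (b - t) < (occCount S a i j : ℝ) := by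
      calc ((2:ℝ)) ^ (b - t) ≤ τ * 2 ^ b := h1
        _ ≤ τ * ((j - i + 1 : ℕ) : ℝ) := by nlinarith
        _ < _ := hmaj
    have : ((2 ^ (b - t) : ℕ) : ℝ) < (occCount S a i j : ℝ) := by push_cast; linarith
    exact_mod_cast this.le
  -- count condition for any occurrence in [i..j]
  have hcount : ∀ k ∈ Finset.Icc i j,
      2 ^ (b - t) ≤ occCount S a (max 1 (k - 2 ^ (b + 1))) (min n (k + 2 ^ (b + 1))) := by
    intro k hk
    simp only [Finset.mem_Icc] at hk
    have hsub : Finset.Icc i j ⊆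
        Finset.Icc (max 1 (k - 2 ^ (b + 1))) (min n (k + 2 ^ (b + 1))) := by
      apply Finset.Icc_subset_Icc <;> [skip; skip] <;>
        · simp only [max_le_iff, le_min_iff]
          omega
    refine le_trans hmain (Finset.card_le_card ?_)
    exact Finset.filter_subset_filter _ hsub
  -- occurrences of a in [i..j] are nonempty
  have hTne : ((Finset.Icc i j).filter (fun k => S k = a)).Nonempty := by
    rw [Finset.nonempty_iff_ne_empty]
    intro h
    have : occCount S a i j = 0 := by simp [occCount, h]
    have hle : (0:ℝ) ≤ τ * ((j - i + 1 : ℕ) : ℝ) := by positivity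
    rw [this] at hmaj
    simp only [Nat.cast_zero] at hmaj
    linarith
  set L := 2 ^ (b - 1) with hLdef
  have hLpos : 0 < L := Nat.pow_pos (by norm_num)
  have hL2b : L ≤ 2 ^ b := Nat.pow_le_pow_right (by norm_num) (by omega)
  -- leftmost occurrence of a in [i..j]
  set ks := ((Finset.Icc i j).filter (fun k => S k = a)).min' hTne with hksdef
  have hksmem := ((Finset.Icc i j).filter (fun k => S k = a)).min'_mem hTne
  rw [Finset.mem_filter, Finset.mem_Icc] at hksmem
  obtain ⟨⟨hiks, hksj⟩, hksa⟩ := hksmem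
  -- the block containing ks
  set q := (ks - 1) / L with hqdef
  set lo := q * L + 1 with hlodef
  set hi := min (lo + L - 1) n with hhidef
  have hA : q * L ≤ ks - 1 := Nat.div_mul_le_self _ _
  have hB : ks - 1 < q * L + L := Nat.lt_div_mul_add hLpos
  have hloks : lo ≤ ks := by omega
  have hkshi : ks ≤ hi := by omega
  -- any element of [lo, hi] has the same block
  have hblock : ∀ k, lo ≤ k → k ≤ hi → (k - 1) / L = q := by
    intro k h1 h2
    have h3 : q * L ≤ k - 1 := by omega
    have h4 : k - 1 < (q + 1) * L := by
      have hql : (q + 1) * L = q * L + L := by ring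
      omega
    exact Nat.div_eq_of_lt_le h3 h4
  have hBne : ((Finset.Icc lo hi).filter (fun k => S k = a)).Nonempty :=
    ⟨ks, by simp [Finset.mem_Icc, hloks, hkshi, hksa]; exact hksa⟩
  set kL := ((Finset.Icc lo hi).filter (fun k => S k = a)).min' hBne with hkLdef
  set kR := ((Finset.Icc lo hi).filter (fun k => S k = a)).max' hBne with hkRdef
  have hkLmem := ((Finset.Icc lo hi).filter (fun k => S k = a)).min'_mem hBne
  have hkRmem := ((Finset.Icc lo hi).filter (fun k => S k = a)).max'_mem hBne
  rw [Finset.mem_filter, Finset.mem_Icc] at hkLmem hkRmem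
  obtain ⟨⟨hlokL, hkLhi⟩, hkLa⟩ := hkLmem
  obtain ⟨⟨hlokR, hkRhi⟩, hkRa⟩ := hkRmem
  have hkLks : kL ≤ ks := Finset.min'_le _ _ (by simp [Finset.mem_Icc, hloks, hkshi, hksa]; exact hksa)
  have hkskR : ks ≤ kR := Finset.le_max' _ _ (by simp [Finset.mem_Icc, hloks, hkshi, hksa]; exact hksa)
  by_cases hcase : i ≤ kL
  · -- kL is a flagged occurrence (leftmost in its block)
    refine ⟨kL, ?_, hkLa, ?_, ?_⟩
    · simp only [Finset.mem_Icc]; omega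
    · rw [hkLa]; exact hcount kL (by simp only [Finset.mem_Icc]; omega)
    · left
      intro k' hk' hk'a
      have hq' : (kL - 1) / 2 ^ (b - 1) = q := hblock kL hlokL hkLhi
      rw [hq'] at hk'
      rw [hkLa] at hk'a
      exact Finset.min'_le _ _ (by
        rw [Finset.mem_filter]
        exact ⟨hk', hk'a⟩)
  · by_cases hcase2 : kR ≤ j
    · -- kR is a flagged occurrence (rightmost in its block)
      refine ⟨kR, ?_, hkRa, ?_, ?_⟩
      · simp only [Finset.mem_Icc]; omega
      · rw [hkRa]; exact hcount kR (by simp only [Finset.mem_Icc]; omega)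
      · right
        intro k' hk' hk'a
        have hq' : (kR - 1) / 2 ^ (b - 1) = q := hblock kR hlokR hkRhi
        rw [hq'] at hk'
        rw [hkRa] at hk'a
        exact Finset.le_max' _ _ (by
          rw [Finset.mem_filter]
          exact ⟨hk', hk'a⟩)
    · -- impossible: the block would be too long
      exfalso
      omega
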